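/- There exist constants c > 0 and C > 0 such that for all sufficiently large positive integers b and N with b^4 ≤ N, there exist a set P of distinct points, a set L of distinct lines, and a set S of distinct planes in R^3 with |P| ≤ CN, |L| ≤ CN, |S| ≤ CN, such that each line of L contains at most b points of P and is contained in at most b planes of S, and the number of flags satisfies I(P, L, S) ≥ c · N b^2. -/

import Mathlib

open scoped Classical
noncomputable section

/-- A line in `ℝ^3`: a nonempty affine subspace of dimension `1`. -/
def IsLine (ℓ : AffineSubspace ℝ (Fin 3 → ℝ)) : Prop :=
  (ℓ : Set (Fin 3 → ℝ)).Nonempty ∧ Module.finrank ℝ ℓ.direction = 1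

/-- A plane in `ℝ^3`: a nonempty affine subspace of dimension `2`. -/
def IsPlane (π : AffineSubspace ℝ (Fin 3 → ℝ)) : Prop :=
  (π : Set (Fin 3 → ℝ)).Nonempty ∧ Module.finrank ℝ π.direction = 2

/-- The number of flags `(p, ℓ, π)` with `p ∈ P`, `ℓ ∈ L`, `π ∈ S`, `p ∈ ℓ`, `ℓ ⊆ π`. -/
def flags3 (P : Finset (Fin 3 → ℝ)) (L S : Finset (AffineSubspace ℝ (Fin 3 → ℝ))) : ℕ :=
  Set.ncard {t : (Fin 3 → ℝ) × AffineSubspace ℝ (Fin 3 → ℝ) × AffineSubspace ℝ (Fin 3 → ℝ) |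
    t.1 ∈ P ∧ t.2.1 ∈ L ∧ t.2.2 ∈ S ∧ t.1 ∈ t.2.1 ∧ t.2.1 ≤ t.2.2}

/-! ### Auxiliary geometry -/

def pt3 (x u v : ℝ) : Fin 3 → ℝ := ![x, u, v]

lemma pt3_eq_iff {a b c d e f : ℝ} : pt3 a b c = pt3 d e f ↔ a = d ∧ b = e ∧ c = f := by
  constructor
  · intro h; exact ⟨congrFun h 0, congrFun h 1, congrFun h 2⟩
  · rintro ⟨rfl, rfl, rfl⟩; rfl

def lineP (s t y z : ℝ) : AffineSubspace ℝ (Fin 3 → ℝ) :=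
  AffineSubspace.mk' (pt3 0 y z) (Submodule.span ℝ {pt3 1 s t})

def planeP (a b c : ℝ) : AffineSubspace ℝ (Fin 3 → ℝ) :=
  AffineSubspace.mk' (pt3 0 0 c) (Submodule.span ℝ {pt3 1 0 a, pt3 0 1 b})

lemma mem_lineP {s t y z : ℝ} {p : Fin 3 → ℝ} :
    p ∈ lineP s t y z ↔ ∃ x : ℝ, p = pt3 x (y + s*x) (z + t*x) := by
  rw [lineP, AffineSubspace.mem_mk', Submodule.mem_span_singleton]
  constructor
  · rintro ⟨x, hx⟩
    refine ⟨x, ?_⟩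
    have h0 := congrFun hx 0
    have h1 := congrFun hx 1
    have h2 := congrFun hx 2
    simp [pt3] at h0 h1 h2
    funext i
    fin_cases i <;> simp [pt3] <;> linarith
  · rintro ⟨x, rfl⟩
    refine ⟨x, ?_⟩
    funext i
    fin_cases i <;> simp [pt3] <;> ring

lemma mem_planeP {a b c : ℝ} {p : Fin 3 → ℝ} :
    p ∈ planeP a b c ↔ p 2 = a * p 0 + b * p 1 + c := by
  rw [planeP, AffineSubspace.mem_mk', Submodule.mem_span_pair]
  constructor
  · rintro ⟨u, v, huv⟩
    have h0 := congrFun huv 0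
    have h1 := congrFun huv 1
    have h2 := congrFun huv 2
    simp [pt3] at h0 h1 h2
    subst h0; subst h1
    ring_nf at h2 ⊢
    linarith
  · intro h
    refine ⟨p 0, p 1, ?_⟩
    funext i
    fin_cases i <;> simp [pt3] <;> linarith

lemma pt3_ne_zero {x u v : ℝ} (hx : x ≠ 0) : pt3 x u v ≠ 0 := fun h => hx (congrFun h 0)

lemma isLine_lineP (s t y z : ℝ) : IsLine (lineP s t y z) := by
  constructor
  · exact ⟨pt3 0 y z, AffineSubspace.self_mem_mk' _ _⟩
  · rw [lineP, AffineSubspace.direction_mk']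
    exact finrank_span_singleton (pt3_ne_zero one_ne_zero)

lemma isPlane_planeP (a b c : ℝ) : IsPlane (planeP a b c) := by
  constructor
  · exact ⟨pt3 0 0 c, AffineSubspace.self_mem_mk' _ _⟩
  · rw [planeP, AffineSubspace.direction_mk']
    have hli : LinearIndependent ℝ ![pt3 1 0 a, pt3 0 1 b] := by
      rw [LinearIndependent.pair_iff]
      intro u v huv
      have h0 := congrFun huv 0
      have h1 := congrFun huv 1
      simp [pt3] at h0 h1
      exact ⟨h0, h1⟩
    have h2 := finrank_span_eq_card hli
    rw [Matrix.range_cons, Matrix.range_cons_empty, ← Set.insert_eq] at h2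
    simpa using h2

lemma pt3_mem_lineP (s t y z x : ℝ) : pt3 x (y + s*x) (z + t*x) ∈ lineP s t y z :=
  mem_lineP.2 ⟨x, rfl⟩

lemma lineP_le_planeP {s t y z a b c : ℝ} :
    lineP s t y z ≤ planeP a b c ↔ t = a + b * s ∧ z = b * y + c := by
  constructor
  · intro h
    have h0 := mem_planeP.1 (h (pt3_mem_lineP s t y z 0))
    have h1 := mem_planeP.1 (h (pt3_mem_lineP s t y z 1))
    simp only [pt3] at h0 h1
    norm_num [Matrix.cons_val_two, Matrix.vecHead, Matrix.vecTail] at h0 h1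
    constructor <;> linarith
  · rintro ⟨rfl, rfl⟩
    intro p hp
    obtain ⟨x, rfl⟩ := mem_lineP.1 hp
    rw [mem_planeP]
    show (b*y+c) + (a+b*s)*x = a * x + b * (y + s*x) + c
    ring

lemma lineP_inj {s t y z s' t' y' z' : ℝ} (h : lineP s t y z = lineP s' t' y' z') :
    s = s' ∧ t = t' ∧ y = y' ∧ z = z' := by
  have h0 : pt3 0 (y + s*0) (z + t*0) ∈ lineP s' t' y' z' := h ▸ pt3_mem_lineP s t y z 0
  have h1 : pt3 1 (y + s*1) (z + t*1) ∈ lineP s' t' y' z' := h ▸ pt3_mem_lineP s t y z 1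
  obtain ⟨x0, hx0⟩ := mem_lineP.1 h0
  obtain ⟨x1, hx1⟩ := mem_lineP.1 h1
  rw [pt3_eq_iff] at hx0 hx1
  obtain ⟨e0, e1, e2⟩ := hx0
  obtain ⟨f0, f1, f2⟩ := hx1
  subst e0; subst f0
  refine ⟨by linarith, by linarith, by linarith, by linarith⟩

lemma planeP_inj {a b c a' b' c' : ℝ} (h : planeP a b c = planeP a' b' c') :
    a = a' ∧ b = b' ∧ c = c' := by
  have key : ∀ p : Fin 3 → ℝ, p 2 = a * p 0 + b * p 1 + c → p 2 = a' * p 0 + b' * p 1 + c' :=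
    fun p hp => mem_planeP.1 (h ▸ mem_planeP.2 hp)
  have k0 := key (pt3 0 0 c) (by show c = a*0 + b*0 + c; ring)
  have k1 := key (pt3 1 0 (a + c)) (by show a+c = a*1 + b*0 + c; ring)
  have k2 := key (pt3 0 1 (b + c)) (by show b+c = a*0 + b*1 + c; ring)
  simp [pt3] at k0 k1 k2
  refine ⟨by linarith, by linarith, by linarith⟩

/-! ### The construction maps -/

def ptN (q : ℕ × ℕ × ℕ) : Fin 3 → ℝ := pt3 q.1 q.2.1 q.2.2

def lineN (q : ℕ × ℕ × ℕ × ℕ) : AffineSubspace ℝ (Fin 3 → ℝ) :=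
  lineP q.1 q.2.1 q.2.2.1 q.2.2.2

def planeZ (q : ℤ × ℕ × ℤ) : AffineSubspace ℝ (Fin 3 → ℝ) :=
  planeP q.1 q.2.1 q.2.2

lemma ptN_inj : Function.Injective ptN := by
  rintro ⟨a1, a2, a3⟩ ⟨b1, b2, b3⟩ h
  obtain ⟨h1, h2, h3⟩ := pt3_eq_iff.1 h
  exact_mod_cast Prod.ext (by exact_mod_cast h1) (Prod.ext (by exact_mod_cast h2)
    (by exact_mod_cast h3))

lemma lineN_inj : Function.Injective lineN := by
  rintro ⟨a1, a2, a3, a4⟩ ⟨b1, b2, b3, b4⟩ h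
  obtain ⟨h1, h2, h3, h4⟩ := lineP_inj h
  exact_mod_cast Prod.ext (by exact_mod_cast h1) (Prod.ext (by exact_mod_cast h2)
    (Prod.ext (by exact_mod_cast h3) (by exact_mod_cast h4)))

lemma planeZ_inj : Function.Injective planeZ := by
  rintro ⟨a1, a2, a3⟩ ⟨b1, b2, b3⟩ h
  obtain ⟨h1, h2, h3⟩ := planeP_inj h
  exact_mod_cast Prod.ext (by exact_mod_cast h1) (Prod.ext (by exact_mod_cast h2)
    (by exact_mod_cast h3))

lemma mul_bound {p q r w : ℕ} (h1 : p < q) (h2 : r < w) : p*r + p + r + 1 ≤ q*w := by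
  calc p*r + p + r + 1 = (p+1)*(r+1) := by ring
  _ ≤ q*w := Nat.mul_le_mul (Nat.succ_le_of_lt h1) (Nat.succ_le_of_lt h2)

def Fmap (w : ℕ × (ℕ × ℕ × ℕ × ℕ) × ℕ) :
    (Fin 3 → ℝ) × AffineSubspace ℝ (Fin 3 → ℝ) × AffineSubspace ℝ (Fin 3 → ℝ) :=
  (ptN (w.1, w.2.1.2.2.1 + w.2.1.1 * w.1, w.2.1.2.2.2 + w.2.1.2.1 * w.1),
   lineN w.2.1,
   planeZ ((w.2.1.2.1 : ℤ) - w.2.2 * w.2.1.1, w.2.2,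
     (w.2.1.2.2.2 : ℤ) - w.2.2 * w.2.1.2.2.1))

set_option maxHeartbeats 1000000 in
theorem flags_lower_bound_Nb_sq :
    ∃ c C : ℝ, 0 < c ∧ 0 < C ∧
      ∃ M : ℕ, ∀ b N : ℕ, M ≤ b → M ≤ N → b ^ 4 ≤ N →
        ∃ (P : Finset (Fin 3 → ℝ)) (L S : Finset (AffineSubspace ℝ (Fin 3 → ℝ))),
          (P.card : ℝ) ≤ C * N ∧ (L.card : ℝ) ≤ C * N ∧ (S.card : ℝ) ≤ C * N ∧
          (∀ ℓ ∈ L, IsLine ℓ) ∧ (∀ π ∈ S, IsPlane π) ∧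
          (∀ ℓ ∈ L, (P.filter (fun p => p ∈ ℓ)).card ≤ b ∧
            (S.filter (fun π => ℓ ≤ π)).card ≤ b) ∧
          c * ((N : ℝ) * (b : ℝ) ^ 2) ≤ (flags3 P L S : ℝ) := by
  refine ⟨1/16, 4, by norm_num, by norm_num, 1, ?_⟩
  intro b N hb1 hN1 hb4
  -- basic numerics
  set n := Nat.sqrt (Nat.sqrt N) with hn
  have hbn : b ≤ n := by
    rw [hn, Nat.le_sqrt, Nat.le_sqrt]
    calc b * b * (b * b) = b ^ 4 := by ring
    _ ≤ N := hb4
  set d := n / b with hd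
  have hb0 : 0 < b := hb1
  have hd1 : 1 ≤ d := (Nat.one_le_div_iff hb0).2 hbn
  have hbdn : b * d ≤ n := by
    rw [hd, mul_comm]
    exact Nat.div_mul_le_self n b
  have hmod : n % b < b := Nat.mod_lt n hb0
  have hdm : b * d + n % b = n := by rw [hd]; exact Nat.div_add_mod n b
  have hn2bd : n + 1 ≤ 2 * (b * d) := by nlinarith
  have hn4N : n ^ 4 ≤ N := by
    have h1 : Nat.sqrt N * Nat.sqrt N ≤ N := Nat.sqrt_le N
    have h2 : n * n ≤ Nat.sqrt N := Nat.sqrt_le (Nat.sqrt N)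
    calc n ^ 4 = (n * n) * (n * n) := by ring
    _ ≤ Nat.sqrt N * Nat.sqrt N := Nat.mul_le_mul h2 h2
    _ ≤ N := h1
  have hNn4 : N < (n + 1) ^ 4 := by
    have h1 : N < (Nat.sqrt N + 1) ^ 2 := by
      have := Nat.lt_succ_sqrt N
      nlinarith [this]
    have h2 : Nat.sqrt N < (n + 1) ^ 2 := by
      have := Nat.lt_succ_sqrt (Nat.sqrt N)
      nlinarith [this]
    calc N < (Nat.sqrt N + 1) ^ 2 := h1
    _ ≤ ((n+1)^2) ^ 2 := by nlinarith
    _ = (n+1) ^ 4 := by ring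
  have hN16 : N ≤ 16 * (b*d)^4 := by
    have h1 : N + 1 ≤ (n+1)^4 := hNn4
    have h2 : (n+1)^4 ≤ (2*(b*d))^4 := Nat.pow_le_pow_left hn2bd 4
    have h3 : (2*(b*d))^4 = 16*(b*d)^4 := by ring
    omega
  -- the finsets
  set boxP : Finset (ℕ × ℕ × ℕ) :=
    Finset.range b ×ˢ Finset.range (2*(b*d)) ×ˢ Finset.range (2*(b*b*d)) with hboxP
  set boxL : Finset (ℕ × ℕ × ℕ × ℕ) :=
    Finset.range d ×ˢ Finset.range (b*d) ×ˢ Finset.range (b*d) ×ˢ Finset.range (b*b*d) with hboxL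
  set boxS : Finset (ℤ × ℕ × ℤ) :=
    Finset.Ico (-((b*d : ℕ) : ℤ)) ((b*d : ℕ) : ℤ) ×ˢ Finset.range b ×ˢ
      Finset.Ico (-((b*b*d : ℕ) : ℤ)) ((b*b*d : ℕ) : ℤ) with hboxS
  refine ⟨boxP.image ptN, boxL.image lineN, boxS.image planeZ, ?_, ?_, ?_, ?_, ?_, ?_, ?_⟩
  · -- |P| ≤ 4N
    have h1 : (boxP.image ptN).card ≤ b * (2*(b*d)) * (2*(b*b*d)) := by
      refine le_trans Finset.card_image_le ?_
      simp [hboxP, Finset.card_product, mul_assoc]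
    have h2 : b * (2*(b*d)) * (2*(b*b*d)) ≤ 4 * N := by
      have k0 : d^2 ≤ d^4 := Nat.pow_le_pow_right hd1 (by norm_num)
      have k1 : b * (2*(b*d)) * (2*(b*b*d)) = 4 * (b^4 * d^2) := by ring
      have k2 : b^4 * d^2 ≤ (b*d)^4 := by
        calc b^4 * d^2 ≤ b^4 * d^4 := Nat.mul_le_mul le_rfl k0
        _ = (b*d)^4 := by ring
      have k3 := le_trans k2 (le_trans (Nat.pow_le_pow_left hbdn 4) hn4N)
      omega
    have := le_trans h1 h2
    push_cast
    exact_mod_cast this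
  · -- |L| ≤ 4N
    have h1 : (boxL.image lineN).card ≤ d * ((b*d) * ((b*d) * (b*b*d))) := by
      refine le_trans Finset.card_image_le ?_
      simp [hboxL, Finset.card_product]
    have h2 : d * ((b*d) * ((b*d) * (b*b*d))) ≤ 4 * N := by
      have he : d * ((b*d) * ((b*d) * (b*b*d))) = (b*d)^4 := by ring
      rw [he]
      calc (b*d)^4 ≤ n^4 := Nat.pow_le_pow_left hbdn 4
      _ ≤ N := hn4N
      _ ≤ 4 * N := by omega
    have := le_trans h1 h2
    push_cast
    exact_mod_cast this
  · -- |S| ≤ 4N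
    have h1 : (boxS.image planeZ).card ≤ (2*(b*d)) * (b * (2*(b*b*d))) := by
      refine le_trans Finset.card_image_le ?_
      rw [hboxS]
      rw [Finset.card_product, Finset.card_product]
      have c1 : (Finset.Ico (-((b*d : ℕ) : ℤ)) ((b*d : ℕ) : ℤ)).card = 2*(b*d) := by
        rw [Int.card_Ico]
        omega
      have c3 : (Finset.Ico (-((b*b*d : ℕ) : ℤ)) ((b*b*d : ℕ) : ℤ)).card = 2*(b*b*d) := by
        rw [Int.card_Ico]
        omega
      rw [c1, c3, Finset.card_range]
    have h2 : (2*(b*d)) * (b * (2*(b*b*d))) ≤ 4 * N := by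
      have k0 : d^2 ≤ d^4 := Nat.pow_le_pow_right hd1 (by norm_num)
      have k1 : (2*(b*d)) * (b * (2*(b*b*d))) = 4 * (b^4 * d^2) := by ring
      have k2 : b^4 * d^2 ≤ (b*d)^4 := by
        calc b^4 * d^2 ≤ b^4 * d^4 := Nat.mul_le_mul le_rfl k0
        _ = (b*d)^4 := by ring
      have k3 := le_trans k2 (le_trans (Nat.pow_le_pow_left hbdn 4) hn4N)
      omega
    have := le_trans h1 h2
    push_cast
    exact_mod_cast this
  · -- lines
    intro ℓ hℓ
    obtain ⟨q, _, rfl⟩ := Finset.mem_image.1 hℓ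
    exact isLine_lineP _ _ _ _
  · -- planes
    intro π hπ
    obtain ⟨q, _, rfl⟩ := Finset.mem_image.1 hπ
    exact isPlane_planeP _ _ _
  · -- per-line conditions
    intro ℓ hℓ
    obtain ⟨⟨s, t, y, z⟩, hq, rfl⟩ := Finset.mem_image.1 hℓ
    constructor
    · -- points on the line
      rw [Finset.filter_image]
      refine le_trans Finset.card_image_le ?_
      refine le_trans (Finset.card_le_card_of_injOn (fun q => q.1)
        (fun q hq' => ?_) ?_) (le_of_eq (Finset.card_range b))
      · rcases Finset.mem_filter.1 hq' with ⟨hbox, _⟩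
        rw [hboxP] at hbox
        simp only [Finset.mem_product] at hbox
        exact Finset.mem_range.2 (Finset.mem_range.1 hbox.1)
      · rintro ⟨x1, u1, v1⟩ h1 ⟨x2, u2, v2⟩ h2 hx
        simp only [Finset.coe_filter, Set.mem_setOf_eq] at h1 h2
        simp only at hx
        subst hx
        obtain ⟨c1, hc1⟩ := mem_lineP.1 h1.2
        obtain ⟨c2, hc2⟩ := mem_lineP.1 h2.2
        rw [ptN] at hc1 hc2
        obtain ⟨e1, e2, e3⟩ := pt3_eq_iff.1 hc1
        obtain ⟨f1, f2, f3⟩ := pt3_eq_iff.1 hc2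
        subst e1; subst f1
        have hu : (u1 : ℝ) = u2 := by rw [e2, f2]
        have hv : (v1 : ℝ) = v2 := by rw [e3, f3]
        exact Prod.ext rfl (Prod.ext (by exact_mod_cast hu) (by exact_mod_cast hv))
    · -- planes through the line
      rw [Finset.filter_image]
      refine le_trans Finset.card_image_le ?_
      refine le_trans (Finset.card_le_card_of_injOn (fun q => q.2.1)
        (fun q hq' => ?_) ?_) (le_of_eq (Finset.card_range b))
      · rcases Finset.mem_filter.1 hq' with ⟨hbox, _⟩
        rw [hboxS] at hbox
        simp only [Finset.mem_product] at hbox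
        exact hbox.2.1
      · rintro ⟨a1, b1, c1⟩ h1 ⟨a2, b2, c2⟩ h2 hx
        simp only [Finset.coe_filter, Set.mem_setOf_eq] at h1 h2
        simp only at hx
        subst hx
        obtain ⟨e1, e2⟩ := lineP_le_planeP.1 h1.2
        obtain ⟨f1, f2⟩ := lineP_le_planeP.1 h2.2
        have ha : (a1 : ℝ) = a2 := by linarith
        have hc : (c1 : ℝ) = c2 := by linarith
        exact Prod.ext (by exact_mod_cast ha) (Prod.ext rfl (by exact_mod_cast hc))
  · -- flags lower bound
    classical
    set Idx : Finset (ℕ × (ℕ × ℕ × ℕ × ℕ) × ℕ) := Finset.range b ×ˢ boxL ×ˢ Finset.range b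
      with hIdx
    have hinj : Set.InjOn Fmap ↑Idx := by
      rintro ⟨x1, q1, β1⟩ _ ⟨x2, q2, β2⟩ _ h
      have h2 := congrArg (fun w => w.2.1) h
      simp only [Fmap] at h2
      have hq : q1 = q2 := lineN_inj h2
      subst hq
      have h1 := congrArg (fun w => w.1) h
      simp only [Fmap, ptN] at h1
      obtain ⟨g1, _, _⟩ := pt3_eq_iff.1 h1
      have hx : x1 = x2 := by exact_mod_cast g1
      subst hx
      have h3 := congrArg (fun w => w.2.2) h
      simp only [Fmap] at h3
      have := planeZ_inj h3
      have hβ : β1 = β2 := by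
        have := congrArg (fun w => w.2.1) this
        exact this
      subst hβ
      rfl
    have hsub : ↑(Idx.image Fmap) ⊆ {t : (Fin 3 → ℝ) × AffineSubspace ℝ (Fin 3 → ℝ) ×
        AffineSubspace ℝ (Fin 3 → ℝ) | t.1 ∈ boxP.image ptN ∧ t.2.1 ∈ boxL.image lineN ∧
        t.2.2 ∈ boxS.image planeZ ∧ t.1 ∈ t.2.1 ∧ t.2.1 ≤ t.2.2} := by
      intro w hw
      rw [Finset.coe_image] at hw
      obtain ⟨⟨x, ⟨s, t, y, z⟩, β⟩, hmem, rfl⟩ := hw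
      rw [Finset.mem_coe, hIdx] at hmem
      simp only [Finset.mem_product, Finset.mem_range, hboxL] at hmem
      obtain ⟨hx, ⟨hs, ht, hy, hz⟩, hβ⟩ := hmem
      refine ⟨?_, ?_, ?_, ?_, ?_⟩
      · -- point in P
        refine Finset.mem_image_of_mem ptN ?_
        rw [hboxP]
        simp only [Finset.mem_product, Finset.mem_range]
        have hm1 := mul_bound hs hx
        have hm2 := mul_bound ht hx
        have e1 : d * b = b * d := by ring
        have e2 : (b*d) * b = b * b * d := by ring
        exact ⟨hx, by linarith, by linarith⟩
      · exact Finset.mem_image_of_mem lineN (by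
          rw [hboxL]; simp only [Finset.mem_product, Finset.mem_range]; exact ⟨hs, ht, hy, hz⟩)
      · -- plane in S
        refine Finset.mem_image_of_mem planeZ ?_
        rw [hboxS]
        simp only [Finset.mem_product, Finset.mem_range, Finset.mem_Ico]
        refine ⟨⟨?_, ?_⟩, hβ, ?_, ?_⟩
        · have hm1 : ((β * s + β + s + 1 : ℕ) : ℤ) ≤ ((b*d : ℕ) : ℤ) :=
            Int.ofNat_le.2 (mul_bound hβ hs)
          have ht0 : (0:ℤ) ≤ (t:ℤ) := Int.natCast_nonneg t
          push_cast at hm1 ⊢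
          linarith
        · have ht' : ((t : ℕ) : ℤ) < ((b*d : ℕ) : ℤ) := Int.ofNat_lt.2 ht
          have h0 : (0:ℤ) ≤ (β:ℤ) * s :=
            mul_nonneg (Int.natCast_nonneg β) (Int.natCast_nonneg s)
          push_cast at ht' ⊢
          linarith
        · have hm1 : ((β * y + β + y + 1 : ℕ) : ℤ) ≤ ((b*(b*d) : ℕ) : ℤ) :=
            Int.ofNat_le.2 (mul_bound hβ hy)
          have hz0 : (0:ℤ) ≤ (z:ℤ) := Int.natCast_nonneg z
          push_cast at hm1 ⊢
          linarith
        · have hz' : ((z : ℕ) : ℤ) < ((b*b*d : ℕ) : ℤ) := Int.ofNat_lt.2 hz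
          have h0 : (0:ℤ) ≤ (β:ℤ) * y :=
            mul_nonneg (Int.natCast_nonneg β) (Int.natCast_nonneg y)
          push_cast at hz' ⊢
          linarith
      · -- incidence point-line
        show ptN _ ∈ lineN (s, t, y, z)
        rw [lineN, ptN]
        refine mem_lineP.2 ⟨(x:ℝ), ?_⟩
        rw [pt3_eq_iff]
        refine ⟨rfl, by push_cast; ring, by push_cast; ring⟩
      · -- incidence line-plane
        show lineN (s, t, y, z) ≤ planeZ _
        rw [lineN, planeZ]
        refine lineP_le_planeP.2 ⟨?_, ?_⟩ <;> push_cast <;> ring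
    have hfin : ({t : (Fin 3 → ℝ) × AffineSubspace ℝ (Fin 3 → ℝ) ×
        AffineSubspace ℝ (Fin 3 → ℝ) | t.1 ∈ boxP.image ptN ∧ t.2.1 ∈ boxL.image lineN ∧
        t.2.2 ∈ boxS.image planeZ ∧ t.1 ∈ t.2.1 ∧ t.2.1 ≤ t.2.2}).Finite := by
      refine Set.Finite.subset ((boxP.image ptN).finite_toSet.prod
        (((boxL.image lineN).finite_toSet).prod ((boxS.image planeZ).finite_toSet))) ?_
      rintro ⟨p, l, π⟩ ⟨h1, h2, h3, _, _⟩
      exact ⟨h1, h2, h3⟩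
    have hcard : Idx.card ≤ flags3 (boxP.image ptN) (boxL.image lineN) (boxS.image planeZ) := by
      rw [flags3]
      calc Idx.card = (Idx.image Fmap).card := (Finset.card_image_of_injOn hinj).symm
      _ = (↑(Idx.image Fmap) : Set _).ncard := (Set.ncard_coe_finset _).symm
      _ ≤ _ := Set.ncard_le_ncard hsub hfin
    have hIdxcard : Idx.card = b^2 * (b^4 * d^4) := by
      rw [hIdx, hboxL]
      simp only [Finset.card_product, Finset.card_range]
      ring
    -- numeric conclusion
    have hnum : N * b^2 ≤ 16 * Idx.card := by
      rw [hIdxcard]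
      calc N * b^2 ≤ (16 * (b*d)^4) * b^2 := Nat.mul_le_mul_right _ hN16
      _ = 16 * (b^2 * (b^4 * d^4)) := by ring
    have := le_trans hnum (Nat.mul_le_mul_left 16 hcard)
    rw [div_mul_eq_mul_div, one_mul, div_le_iff₀ (by norm_num : (0:ℝ) < 16)]
    calc (N:ℝ) * (b:ℝ)^2 = ((N * b^2 : ℕ) : ℝ) := by push_cast; ring
    _ ≤ ((16 * flags3 (boxP.image ptN) (boxL.image lineN) (boxS.image planeZ) : ℕ) : ℝ) := by
        exact_mod_cast this
    _ = _ := by push_cast; ring
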